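/- The function f(ζ) = (Φ(ζ) / (1 - Φ(ζ))) · e^{-2ζ√(2/π)} is strictly increasing on (0, ∞), and f(0) = 1. -/

import Mathlib

open MeasureTheory ProbabilityTheory Real

/-- The standard normal cumulative distribution function. -/
noncomputable def stdNormalCDF (s : ℝ) : ℝ := (gaussianReal 0 1 (Set.Iic s)).toReal
noncomputable def npdf (x : ℝ) : ℝ := (Real.sqrt (2 * π))⁻¹ * Real.exp (-x^2/2)

lemma npdf_eq (x : ℝ) : gaussianPDFReal 0 1 x = npdf x := by
  simp [gaussianPDFReal, npdf]

lemma npdf_integrable : Integrable npdf := by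
  have := integrable_gaussianPDFReal 0 1
  simpa [funext npdf_eq] using this

lemma cdf_eq (s : ℝ) : stdNormalCDF s = ∫ x in Set.Iic s, npdf x := by
  rw [stdNormalCDF, gaussianReal_apply_eq_integral 0 one_ne_zero,
    ENNReal.toReal_ofReal (integral_nonneg fun x => (gaussianPDFReal_nonneg 0 1 x))]
  exact setIntegral_congr_fun measurableSet_Iic fun x _ => npdf_eq x

lemma cdf_sub (a b : ℝ) : stdNormalCDF b - stdNormalCDF a = ∫ x in a..b, npdf x := by
  rw [cdf_eq, cdf_eq]
  exact intervalIntegral.integral_Iic_sub_Iic npdf_integrable.integrableOn npdf_integrable.integrableOn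

lemma npdf_pos (x : ℝ) : 0 < npdf x := by
  have := Real.pi_pos
  unfold npdf; positivity

lemma npdf_cont : Continuous npdf := by unfold npdf; continuity

lemma npdf_total : ∫ x, npdf x = 1 := by
  have := integral_gaussianPDFReal_eq_one 0 (v := 1) one_ne_zero
  simpa [funext npdf_eq] using this

lemma cdf_hasDeriv (x : ℝ) : HasDerivAt stdNormalCDF (npdf x) x := by
  have h : ∀ s, stdNormalCDF s = stdNormalCDF 0 + ∫ t in (0:ℝ)..s, npdf t := by
    intro s; rw [← cdf_sub]; ring
  have h2 : HasDerivAt (fun s => stdNormalCDF 0 + ∫ t in (0:ℝ)..s, npdf t) (npdf x) x := by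
    refine HasDerivAt.const_add _ ?_
    exact intervalIntegral.integral_hasDerivAt_right (npdf_cont.intervalIntegrable 0 x)
      (npdf_cont.stronglyMeasurableAtFilter volume (nhds x)) npdf_cont.continuousAt
  exact h2.congr_of_eventuallyEq (Filter.Eventually.of_forall h)

lemma cdf_cont : Continuous stdNormalCDF := by
  have : Differentiable ℝ stdNormalCDF := fun x => (cdf_hasDeriv x).differentiableAt
  exact this.continuous

lemma cdf_lt {a b : ℝ} (hab : a < b) : stdNormalCDF a < stdNormalCDF b := by
  have h : 0 < ∫ x in a..b, npdf x :=
    intervalIntegral.intervalIntegral_pos_of_pos (npdf_cont.intervalIntegrable a b)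
      (fun x => npdf_pos x) hab
  have h2 := cdf_sub a b
  linarith

lemma cdf_le_one (a : ℝ) : stdNormalCDF a ≤ 1 := by
  rw [stdNormalCDF]
  have h := prob_le_one (μ := gaussianReal 0 1) (s := Set.Iic a)
  calc (gaussianReal 0 1 (Set.Iic a)).toReal ≤ (1 : ENNReal).toReal :=
        ENNReal.toReal_mono ENNReal.one_ne_top h
    _ = 1 := ENNReal.toReal_one

lemma cdf_nonneg (a : ℝ) : 0 ≤ stdNormalCDF a := ENNReal.toReal_nonneg

lemma cdf_lt_one (a : ℝ) : stdNormalCDF a < 1 :=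
  lt_of_lt_of_le (cdf_lt (by linarith : a < a + 1)) (cdf_le_one _)

lemma cdf_pos (a : ℝ) : 0 < stdNormalCDF a :=
  lt_of_le_of_lt (cdf_nonneg (a-1)) (cdf_lt (by linarith))

lemma cdf_zero : stdNormalCDF 0 = 1/2 := by
  have h1 : ∫ x in Set.Iic (0:ℝ), npdf x = ∫ x in Set.Ioi (0:ℝ), npdf x := by
    rw [show Set.Ioi (0:ℝ) = Set.Ioi (-0) by norm_num, ← integral_comp_neg_Iic]
    apply setIntegral_congr_fun measurableSet_Iic
    intro x _; simp [npdf, neg_sq]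
  have h2 : (∫ x in Set.Iic (0:ℝ), npdf x) + ∫ x in Set.Ioi (0:ℝ), npdf x = 1 := by
    rw [← npdf_total, ← setIntegral_union (Set.Iic_disjoint_Ioi le_rfl) measurableSet_Ioi
      npdf_integrable.integrableOn npdf_integrable.integrableOn, Set.Iic_union_Ioi,
      setIntegral_univ]
  rw [cdf_eq]
  rw [← h1] at h2
  linarith

lemma cdf_tendsto : Filter.Tendsto stdNormalCDF Filter.atTop (nhds 1) := by
  have h := tendsto_measure_Iic_atTop (μ := gaussianReal 0 1)
  have h2 : Filter.Tendsto (fun s => (gaussianReal 0 1 (Set.Iic s)).toReal) Filter.atTop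
      (nhds ((gaussianReal 0 1 Set.univ).toReal)) :=
    (ENNReal.tendsto_toReal (by simp)).comp h
  simp at h2; exact h2

noncomputable def cc : ℝ := 2 * Real.sqrt (2/π)

lemma key_sqrt : Real.sqrt (2/π) * Real.sqrt (2*π) = 2 := by
  rw [← Real.sqrt_mul (by positivity)]
  rw [show 2/π*(2*π) = 4 by field_simp; ring]
  rw [show (4:ℝ) = 2^2 by norm_num, Real.sqrt_sq (by norm_num)]

lemma sqrt2pi_pos : 0 < Real.sqrt (2*π) := Real.sqrt_pos.2 (by positivity)

lemma cc_pos : 0 < cc := by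
  have := Real.pi_pos
  unfold cc; positivity

lemma cc_lt_two : cc < 2 := by
  have h : Real.sqrt (2/π) < 1 := by
    rw [show (1:ℝ) = Real.sqrt 1 by simp]
    apply Real.sqrt_lt_sqrt (by positivity)
    rw [div_lt_one Real.pi_pos]
    linarith [Real.pi_gt_three]
  unfold cc; linarith

lemma cc_quarter : cc / 4 = (Real.sqrt (2*π))⁻¹ := by
  have h : cc / 4 * Real.sqrt (2*π) = 1 := by
    unfold cc
    rw [show 2*Real.sqrt (2/π)/4*Real.sqrt (2*π) = Real.sqrt (2/π)*Real.sqrt (2*π)/2 by ring,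
      key_sqrt]
    norm_num
  have h2 := sqrt2pi_pos
  field_simp at h ⊢
  linarith

noncomputable def x1 : ℝ := Real.sqrt (2 * Real.log (4/π))

lemma log4pi_pos : 0 < Real.log (4/π) := by
  apply Real.log_pos
  rw [lt_div_iff₀ Real.pi_pos]
  linarith [Real.pi_lt_d2]

lemma x1_pos : 0 < x1 := Real.sqrt_pos.2 (by linarith [log4pi_pos])

lemma x1_sq : x1^2 = 2 * Real.log (4/π) := Real.sq_sqrt (by linarith [log4pi_pos])

lemma x1_lt_two : x1 < 2 := by
  have h : Real.log (4/π) < 4/π - 1 :=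
    Real.log_lt_sub_one_of_pos (by positivity) (by
      intro hcon
      rw [div_eq_one_iff_eq (by positivity)] at hcon
      linarith [Real.pi_lt_d2])
  have h4 : 4/π < 2 := by
    rw [div_lt_iff₀ Real.pi_pos]; linarith [Real.pi_gt_three]
  have : 2 * Real.log (4/π) < 4 := by linarith
  calc x1 < Real.sqrt 4 := Real.sqrt_lt_sqrt (by linarith [log4pi_pos]) this
    _ = 2 := by rw [show (4:ℝ) = 2^2 by norm_num, Real.sqrt_sq (by norm_num)]

lemma npdf_x1 : npdf x1 = (Real.sqrt (2*π))⁻¹ * (π/4) := by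
  unfold npdf
  congr 1
  rw [show -x1^2/2 = -Real.log (4/π) by rw [x1_sq]; ring, Real.exp_neg,
    Real.exp_log (by positivity)]
  field_simp

lemma two_cc_npdf_x1 : 2 * cc * npdf x1 = 1 := by
  rw [npdf_x1, ← cc_quarter]
  have hc : cc^2 = 8/π := by
    unfold cc
    rw [mul_pow, Real.sq_sqrt (by positivity)]
    ring
  have := Real.pi_pos
  field_simp at hc ⊢
  nlinarith

lemma npdf_strictAnti {a b : ℝ} (ha : 0 ≤ a) (hab : a < b) : npdf b < npdf a := by
  unfold npdf
  have h2 := sqrt2pi_pos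
  apply mul_lt_mul_of_pos_left _ (by positivity)
  apply Real.exp_lt_exp.2
  nlinarith

lemma npdf_hasDeriv (x : ℝ) : HasDerivAt npdf (-x * npdf x) x := by
  have h1 : HasDerivAt (fun x : ℝ => -x^2/2) (-x) x := by
    have := ((hasDerivAt_pow 2 x).neg).div_const 2
    refine this.congr_deriv ?_; ring
  have h2 := (h1.exp).const_mul (Real.sqrt (2*π))⁻¹
  refine h2.congr_deriv ?_
  unfold npdf; ring

noncomputable def hf (x : ℝ) : ℝ := cc * (2 * stdNormalCDF x - 1) - x
noncomputable def gf (x : ℝ) : ℝ := npdf x - cc * (stdNormalCDF x * (1 - stdNormalCDF x))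

lemma hf_hasDeriv (x : ℝ) : HasDerivAt hf (2 * cc * npdf x - 1) x := by
  have h := ((((cdf_hasDeriv x).const_mul 2).sub_const 1).const_mul cc).sub (hasDerivAt_id x)
  refine h.congr_deriv ?_
  ring

lemma gf_hasDeriv (x : ℝ) : HasDerivAt gf (npdf x * hf x) x := by
  have h1 := (cdf_hasDeriv x).mul ((hasDerivAt_const x (1:ℝ)).sub (cdf_hasDeriv x))
  have h := (npdf_hasDeriv x).sub (h1.const_mul cc)
  refine h.congr_deriv ?_
  unfold hf; simp only [Pi.sub_apply]; ring

lemma hf_cont : Continuous hf := by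
  unfold hf
  exact (continuous_const.mul ((continuous_const.mul cdf_cont).sub continuous_const)).sub continuous_id

lemma hf_zero : hf 0 = 0 := by simp [hf, cdf_zero]

lemma hf_mono : StrictMonoOn hf (Set.Icc 0 x1) := by
  apply strictMonoOn_of_deriv_pos (convex_Icc 0 x1) hf_cont.continuousOn
  intro t ht
  rw [interior_Icc] at ht
  rw [(hf_hasDeriv t).deriv]
  have h1 : npdf x1 < npdf t := npdf_strictAnti ht.1.le ht.2
  nlinarith [two_cc_npdf_x1, cc_pos]

lemma hf_anti : StrictAntiOn hf (Set.Ici x1) := by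
  apply strictAntiOn_of_deriv_neg (convex_Ici x1) hf_cont.continuousOn
  intro t ht
  rw [interior_Ici] at ht
  rw [(hf_hasDeriv t).deriv]
  have h1 : npdf t < npdf x1 := npdf_strictAnti x1_pos.le ht
  nlinarith [two_cc_npdf_x1, cc_pos]

lemma hf_x1_pos : 0 < hf x1 := by
  have := hf_mono (Set.left_mem_Icc.2 (by linarith [x1_pos, x1_lt_two]))
    (Set.right_mem_Icc.2 (by linarith [x1_pos, x1_lt_two])) x1_pos
  rwa [hf_zero] at this

lemma hf_two_neg : hf 2 < 0 := by
  have h1 := cdf_le_one 2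
  have h2 := cc_lt_two
  have h3 := cc_pos
  unfold hf
  nlinarith

lemma exists_x2 : ∃ x2, x1 ≤ x2 ∧ x2 ≤ 2 ∧ hf x2 = 0 := by
  have h := intermediate_value_Icc' (le_of_lt x1_lt_two) hf_cont.continuousOn
  have h0 : (0:ℝ) ∈ Set.Icc (hf 2) (hf x1) := ⟨hf_two_neg.le, hf_x1_pos.le⟩
  obtain ⟨x2, hx2, hval⟩ := h h0
  exact ⟨x2, hx2.1, hx2.2, hval⟩

lemma gf_cont : Continuous gf :=
  npdf_cont.sub (continuous_const.mul (cdf_cont.mul (continuous_const.sub cdf_cont)))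

lemma gf_zero : gf 0 = 0 := by
  have h := cc_quarter
  simp only [gf, cdf_zero]
  rw [show npdf 0 = (Real.sqrt (2*π))⁻¹ by simp [npdf]]
  rw [← h]; ring


section X2
variable {x2 : ℝ} (h1 : x1 ≤ x2) (h2 : x2 ≤ 2) (h0 : hf x2 = 0)
include h1 h0

lemma hf_pos_of {t : ℝ} (ht0 : 0 < t) (htx : t < x2) : 0 < hf t := by
  rcases le_or_gt t x1 with h | h
  · have := hf_mono (Set.left_mem_Icc.2 (by linarith [x1_pos])) ⟨ht0.le, h⟩ ht0
    rwa [hf_zero] at this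
  · have := hf_anti (Set.mem_Ici.2 h.le) (Set.mem_Ici.2 (by linarith)) htx
    rwa [h0] at this

lemma hf_neg_of {t : ℝ} (htx : x2 < t) : hf t < 0 := by
  have := hf_anti (Set.mem_Ici.2 h1) (Set.mem_Ici.2 (by linarith)) htx
  rwa [h0] at this

lemma gf_mono : StrictMonoOn gf (Set.Icc 0 x2) := by
  apply strictMonoOn_of_deriv_pos (convex_Icc 0 x2) gf_cont.continuousOn
  intro t ht
  rw [interior_Icc] at ht
  rw [(gf_hasDeriv t).deriv]
  exact mul_pos (npdf_pos t) (hf_pos_of h1 h0 ht.1 ht.2)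

lemma gf_anti : StrictAntiOn gf (Set.Ici x2) := by
  apply strictAntiOn_of_deriv_neg (convex_Ici x2) gf_cont.continuousOn
  intro t ht
  rw [interior_Ici] at ht
  rw [(gf_hasDeriv t).deriv]
  exact mul_neg_of_pos_of_neg (npdf_pos t) (hf_neg_of h1 h0 ht)

end X2

lemma npdf_tendsto : Filter.Tendsto npdf Filter.atTop (nhds 0) := by
  rw [show (0:ℝ) = (Real.sqrt (2*π))⁻¹ * 0 by ring]
  apply Filter.Tendsto.const_mul
  have hsq : Filter.Tendsto (fun k : ℝ => k^2/2) Filter.atTop Filter.atTop :=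
    (Filter.tendsto_pow_atTop two_ne_zero).atTop_div_const (by norm_num)
  have hneg : Filter.Tendsto (fun k : ℝ => -(k^2/2)) Filter.atTop Filter.atBot :=
    Filter.tendsto_neg_atTop_atBot.comp hsq
  have := Real.tendsto_exp_atBot.comp hneg
  apply this.congr
  intro k
  simp [neg_div]

lemma gf_tendsto : Filter.Tendsto gf Filter.atTop (nhds 0) := by
  have h1 : Filter.Tendsto (fun x => cc * (stdNormalCDF x * (1 - stdNormalCDF x)))
      Filter.atTop (nhds (cc * (1 * (1 - 1)))) :=
    (Filter.Tendsto.const_mul cc (cdf_tendsto.mul ((tendsto_const_nhds).sub cdf_tendsto)))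
  have h2 := npdf_tendsto.sub h1
  simp at h2; exact h2

lemma gf_pos {x : ℝ} (hx : 0 < x) : 0 < gf x := by
  obtain ⟨x2, h1, h2, h0⟩ := exists_x2
  have hx2pos : 0 < x2 := lt_of_lt_of_le x1_pos h1
  rcases le_or_gt x x2 with h | h
  · have := gf_mono h1 h0 (Set.left_mem_Icc.2 hx2pos.le) ⟨hx.le, h⟩ hx
    rwa [gf_zero] at this
  · have key : gf x > gf (x+1) :=
      gf_anti h1 h0 (Set.mem_Ici.2 h.le) (Set.mem_Ici.2 (by linarith)) (by linarith)
    have hge : 0 ≤ gf (x+1) := by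
      apply le_of_tendsto gf_tendsto
      filter_upwards [Filter.eventually_ge_atTop (x+1)] with y hy
      rcases eq_or_lt_of_le hy with rfl | hlt
      · rfl
      · exact (gf_anti h1 h0 (Set.mem_Ici.2 (by linarith)) (Set.mem_Ici.2 (by linarith : x2 ≤ y)) hlt).le
    linarith

lemma key_ineq {x : ℝ} (hx : 0 < x) :
    cc * (stdNormalCDF x * (1 - stdNormalCDF x)) < npdf x := by
  have := gf_pos hx
  unfold gf at this
  linarith

lemma one_sub_cdf_pos (x : ℝ) : 0 < 1 - stdNormalCDF x := by linarith [cdf_lt_one x]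

noncomputable def Ff (ζ : ℝ) : ℝ :=
  (stdNormalCDF ζ / (1 - stdNormalCDF ζ)) * Real.exp (-2 * ζ * Real.sqrt (2 / π))

lemma Ff_hasDeriv (x : ℝ) : HasDerivAt Ff
    (Real.exp (-2 * x * Real.sqrt (2/π)) *
      (npdf x - cc * (stdNormalCDF x * (1 - stdNormalCDF x))) / (1 - stdNormalCDF x)^2) x := by
  have hne : (1:ℝ) - stdNormalCDF x ≠ 0 := (one_sub_cdf_pos x).ne'
  have d1 : HasDerivAt (fun ζ => stdNormalCDF ζ / (1 - stdNormalCDF ζ))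
      (npdf x / (1 - stdNormalCDF x)^2) x := by
    have hd := (cdf_hasDeriv x).div ((hasDerivAt_const x (1:ℝ)).sub (cdf_hasDeriv x)) hne
    refine hd.congr_deriv ?_
    simp only [Pi.sub_apply]
    field_simp
    ring
  have din : HasDerivAt (fun ζ : ℝ => -2 * ζ * Real.sqrt (2/π)) (-2 * Real.sqrt (2/π)) x := by
    have := ((hasDerivAt_id x).const_mul (-2:ℝ)).mul_const (Real.sqrt (2/π))
    simpa using this
  have d2 : HasDerivAt (fun ζ : ℝ => Real.exp (-2 * ζ * Real.sqrt (2/π)))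
      (Real.exp (-2 * x * Real.sqrt (2/π)) * (-2 * Real.sqrt (2/π))) x := din.exp
  have hmul := d1.mul d2
  refine hmul.congr_deriv ?_
  unfold cc
  field_simp
  ring

/-- The function `f(ζ) = (Φ(ζ)/(1-Φ(ζ))) e^{-2ζ√(2/π)}` is strictly increasing on
`(0, ∞)`, and `f(0) = 1`. -/
theorem stmt_14 :
    StrictMonoOn
      (fun ζ : ℝ => (stdNormalCDF ζ / (1 - stdNormalCDF ζ)) *
        Real.exp (-2 * ζ * Real.sqrt (2 / Real.pi))) (Set.Ioi (0 : ℝ)) ∧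
    (stdNormalCDF 0 / (1 - stdNormalCDF 0)) * Real.exp (-2 * 0 * Real.sqrt (2 / Real.pi)) = 1 := by
  constructor
  · have hF : (fun ζ : ℝ => (stdNormalCDF ζ / (1 - stdNormalCDF ζ)) *
        Real.exp (-2 * ζ * Real.sqrt (2 / Real.pi))) = Ff := rfl
    rw [hF]
    apply strictMonoOn_of_deriv_pos (convex_Ioi 0)
    · have : Differentiable ℝ Ff := fun x => (Ff_hasDeriv x).differentiableAt
      exact this.continuous.continuousOn
    · intro x hx
      rw [interior_Ioi] at hx
      rw [(Ff_hasDeriv x).deriv]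
      have h1 := key_ineq hx
      have h2 := one_sub_cdf_pos x
      have h3 := Real.exp_pos (-2 * x * Real.sqrt (2/π))
      apply div_pos (mul_pos h3 (by linarith)) (by positivity)
  · rw [cdf_zero]
    norm_num
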